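/- Strict positivity of the completely positive map Ψ(X) = Σ_i V_i X V_i* is equivalent to the nonexistence of a rank-one matrix in the orthogonal complement (with respect to the trace inner product) of the linear span of {V_1,...,V_m} in ℂ^{n×n}. -/

import Mathlib

open Matrix ComplexOrder

private lemma aux_exists_mulVec_ne {k l : ℕ} {A : Matrix (Fin k) (Fin l) ℂ} (hA : A ≠ 0) :
    ∃ v, A *ᵥ v ≠ 0 := by
  by_contra h
  push_neg at h
  apply hA
  ext i j
  have := congrFun (h (Pi.single j 1)) i
  simpa using this

private lemma aux_rank_ne_zero {k l : ℕ} {A : Matrix (Fin k) (Fin l) ℂ} (hA : A ≠ 0) :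
    A.rank ≠ 0 := by
  intro h
  rw [Matrix.rank, Submodule.finrank_eq_zero, LinearMap.range_eq_bot] at h
  obtain ⟨v, hv⟩ := aux_exists_mulVec_ne hA
  exact hv (by simpa using congrFun (congrArg DFunLike.coe h) v)

private lemma aux_vecMulVec_mulVec {k : ℕ} (u s w : Fin k → ℂ) :
    vecMulVec u s *ᵥ w = (s ⬝ᵥ w) • u := by
  ext i
  simp only [mulVec, dotProduct, vecMulVec_apply, Pi.smul_apply, smul_eq_mul, Finset.sum_mul]
  exact Finset.sum_congr rfl fun j _ => by ring

private lemma aux_rank_vecMulVec {k : ℕ} {u s : Fin k → ℂ} (hu : u ≠ 0) (hs : s ≠ 0) :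
    (vecMulVec u s).rank = 1 := by
  have h1 : (vecMulVec u s).rank ≤ 1 := by
    rw [vecMulVec_eq (Fin 1)]
    calc (replicateCol (Fin 1) u * replicateRow (Fin 1) s).rank ≤ (replicateCol (Fin 1) u).rank := rank_mul_le_left _ _
    _ ≤ Fintype.card (Fin 1) := rank_le_card_width _
    _ = 1 := Fintype.card_fin 1
  have h2 : (vecMulVec u s).rank ≠ 0 := by
    apply aux_rank_ne_zero
    obtain ⟨i, hi⟩ := Function.ne_iff.mp hu
    obtain ⟨j, hj⟩ := Function.ne_iff.mp hs
    intro h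
    have := congrFun (congrFun h i) j
    simp only [vecMulVec_apply, Matrix.zero_apply] at this
    exact (mul_ne_zero hi hj) this
  omega

private lemma aux_rank_one_decomp {k : ℕ} {R : Matrix (Fin k) (Fin k) ℂ} (hR : R.rank = 1) :
    ∃ u a : Fin k → ℂ, u ≠ 0 ∧ a ≠ 0 ∧ R = vecMulVec u a := by
  have hR0 : R ≠ 0 := by
    intro h
    rw [h, rank_zero] at hR
    exact absurd hR (by omega)
  rw [Matrix.rank] at hR
  obtain ⟨v, hv0, hv⟩ := finrank_eq_one_iff'.mp hR
  have hcol : ∀ j, ∃ c : ℂ, c • (v : Fin k → ℂ) = R *ᵥ Pi.single j 1 := by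
    intro j
    obtain ⟨c, hc⟩ := hv ⟨R *ᵥ Pi.single j 1, ⟨Pi.single j 1, rfl⟩⟩
    exact ⟨c, congrArg Subtype.val hc⟩
  choose a ha using hcol
  have hmat : R = vecMulVec (v : Fin k → ℂ) a := by
    ext i j
    have := congrFun (ha j) i
    simp only [Pi.smul_apply, smul_eq_mul, mulVec_single, mul_one, op_smul_eq_mul, col_apply] at this
    rw [vecMulVec_apply, ← this, mul_comm]
  have hvne : (v : Fin k → ℂ) ≠ 0 := by
    intro h
    exact hv0 (Subtype.ext h)
  refine ⟨v, a, hvne, ?_, hmat⟩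
  intro h
  rw [h] at hmat
  apply hR0
  rw [hmat]
  ext i j
  simp [vecMulVec_apply]

private lemma aux_trace_mul_vecMulVec {k : ℕ} (A : Matrix (Fin k) (Fin k) ℂ) (u s : Fin k → ℂ) :
    (A * vecMulVec u s).trace = (A *ᵥ u) ⬝ᵥ s := by
  simp only [trace, diag_apply, mul_apply, vecMulVec_apply, mulVec, dotProduct, Finset.sum_mul]
  exact Finset.sum_congr rfl fun j _ => Finset.sum_congr rfl fun l _ => by ring

private lemma aux_sum_mulVec {k m : ℕ} (A : Fin m → Matrix (Fin k) (Fin k) ℂ) (x : Fin k → ℂ) :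
    (∑ i, A i) *ᵥ x = ∑ i, A i *ᵥ x := by
  ext j
  simp only [mulVec, dotProduct, Matrix.sum_apply, Finset.sum_apply, Finset.sum_mul]
  rw [Finset.sum_comm]

private lemma aux_dot_sum {k m : ℕ} (v : Fin k → ℂ) (w : Fin m → Fin k → ℂ) :
    v ⬝ᵥ ∑ i, w i = ∑ i, v ⬝ᵥ w i := by
  simp only [dotProduct, Finset.sum_apply, Finset.mul_sum]
  rw [Finset.sum_comm]

private lemma aux_quad_form {k : ℕ} (A B : Matrix (Fin k) (Fin k) ℂ) (x : Fin k → ℂ) :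
    star x ⬝ᵥ (B * A * Bᴴ) *ᵥ x = star (Bᴴ *ᵥ x) ⬝ᵥ A *ᵥ (Bᴴ *ᵥ x) := by
  rw [star_mulVec, conjTranspose_conjTranspose, ← mulVec_mulVec, ← mulVec_mulVec,
    dotProduct_mulVec]

theorem stmt7 (n m : ℕ) (V : Fin m → Matrix (Fin n) (Fin n) ℂ) :
    (∀ X : Matrix (Fin n) (Fin n) ℂ, X.PosSemidef → X ≠ 0 →
        (∑ i, V i * X * (V i)ᴴ).PosDef) ↔
      ¬ ∃ R : Matrix (Fin n) (Fin n) ℂ, R.rank = 1 ∧ ∀ i, ((V i)ᴴ * R).trace = 0 := by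
  constructor
  · rintro h ⟨R, hrank, htr⟩
    obtain ⟨u, a, hu, ha, hRe⟩ := aux_rank_one_decomp hrank
    set y : Fin n → ℂ := star a with hy_def
    have hy : y ≠ 0 := fun h0 => ha (by simpa [hy_def] using congrArg star h0)
    set X : Matrix (Fin n) (Fin n) ℂ := vecMulVec y (star y) with hX_def
    have hX : X.PosSemidef := by
      rw [hX_def, vecMulVec_eq (Fin 1), ← conjTranspose_replicateCol]
      exact posSemidef_self_mul_conjTranspose _
    have hXne : X ≠ 0 := by
      obtain ⟨i, hi⟩ := Function.ne_iff.mp hy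
      intro h0
      have h1 := congrFun (congrFun h0 i) i
      simp only [hX_def, vecMulVec_apply, Matrix.zero_apply, Pi.star_apply] at h1
      rcases mul_eq_zero.mp h1 with h2 | h2
      · exact hi (by simpa using h2)
      · exact hi (by simpa using star_eq_zero.mp h2)
    have hPD := (h X hX hXne).dotProduct_mulVec_pos hu
    have hzero : (∑ i, V i * X * (V i)ᴴ) *ᵥ u = 0 := by
      rw [aux_sum_mulVec]
      apply Finset.sum_eq_zero
      intro i _
      have hw : X *ᵥ ((V i)ᴴ *ᵥ u) = 0 := by
        rw [hX_def, aux_vecMulVec_mulVec]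
        have : star y ⬝ᵥ ((V i)ᴴ *ᵥ u) = 0 := by
          have := htr i
          rw [hRe, aux_trace_mul_vecMulVec] at this
          rw [hy_def, star_star, dotProduct_comm]
          exact this
        rw [this, zero_smul]
      rw [← mulVec_mulVec, ← mulVec_mulVec, hw, mulVec_zero]
    rw [hzero, dotProduct_zero] at hPD
    exact lt_irrefl 0 hPD
  · intro hno X hX hXne
    have hsum : (∑ i, V i * X * (V i)ᴴ).PosSemidef := by
      exact Finset.sum_induction (fun i => V i * X * (V i)ᴴ) (fun M => M.PosSemidef)
        (fun A B hA hB => hA.add hB) Matrix.PosSemidef.zero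
        (fun i _ => hX.mul_mul_conjTranspose_same (V i))
    refine PosDef.of_dotProduct_mulVec_pos hsum.isHermitian fun x hx => lt_of_le_of_ne (hsum.dotProduct_mulVec_nonneg x) fun h0 => ?_
    -- h0 : 0 = star x ⬝ᵥ _ *ᵥ x ; derive a rank-one R in the orthocomplement
    have hterms : ∀ i, star ((V i)ᴴ *ᵥ x) ⬝ᵥ X *ᵥ ((V i)ᴴ *ᵥ x) = 0 := by
      have hsum0 : ∑ i, star ((V i)ᴴ *ᵥ x) ⬝ᵥ X *ᵥ ((V i)ᴴ *ᵥ x) = 0 := by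
        have e1 : star x ⬝ᵥ (∑ i, V i * X * (V i)ᴴ) *ᵥ x
            = ∑ i, star ((V i)ᴴ *ᵥ x) ⬝ᵥ X *ᵥ ((V i)ᴴ *ᵥ x) := by
          rw [aux_sum_mulVec (fun i => V i * X * (V i)ᴴ) x, aux_dot_sum]
          exact Finset.sum_congr rfl fun i _ => aux_quad_form X (V i) x
        rw [← e1, ← h0]
      intro i
      have := (Finset.sum_eq_zero_iff_of_nonneg (fun i _ => hX.dotProduct_mulVec_nonneg ((V i)ᴴ *ᵥ x))).mp hsum0
      exact this i (Finset.mem_univ i)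
    have hXw : ∀ i, X *ᵥ ((V i)ᴴ *ᵥ x) = 0 := fun i =>
      (hX.dotProduct_mulVec_zero_iff _).mp (hterms i)
    obtain ⟨v, hv⟩ := aux_exists_mulVec_ne hXne
    set y : Fin n → ℂ := X *ᵥ v with hy_def
    apply hno
    refine ⟨vecMulVec x (star y), aux_rank_vecMulVec hx (fun h0 => hv ?_), fun i => ?_⟩
    · have := congrArg star h0
      simpa [hy_def] using this
    · rw [aux_trace_mul_vecMulVec]
      have hsy : star y = star v ᵥ* X := by
        rw [hy_def, star_mulVec, hX.1.eq]
      rw [dotProduct_comm, hsy, ← dotProduct_mulVec, hXw i, dotProduct_zero]
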